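/- Let n ≥ 1 be an integer, 0 ≤ ε ≤ 1, p ∈ [0,1], and let k ≥ 2 be an even integer. Let X_1,…,X_n be {0,1}-valued random variables with identical marginal distributions that are k-wise ε-approximately independent for the product distribution D(n,p), and let X̂_1,…,X̂_n be mutually independent {0,1}-valued random variables with Pr[X̂_i = 1] = p for every i. Set X = X_1 + … + X_n, X̂ = X̂_1 + … + X̂_n, and μ = E[X]. Then |E[(X − μ)^k] − E[(X̂ − μ)^k]| ≤ ε·n^k. -/

import Mathlib

open MeasureTheory

/-- `X_1, …, X_n` (0-1 valued random variables) are `k`-wise `ε`-approximately independent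
for the product distribution `D(n,p)`. -/
def KWiseApproxIndep {Ω : Type*} [MeasureSpace Ω] (n : ℕ) (X : Fin n → Ω → ℝ)
    (k : ℕ) (ε p : ℝ) : Prop :=
  ∀ t : ℕ, t ≤ k → ∀ idx : Fin t → Fin n, Function.Injective idx →
    ∀ b : Fin t → Bool,
      |(volume {ω | ∀ j, X (idx j) ω = (if b j then 1 else 0)}).toReal -
        ∏ j, (if b j then p else 1 - p)| ≤ ε

section Aux
open scoped Classical

/-- Expectation of a function of 0-1 random variables as a sum over Boolean assignments. -/
lemma expand_expectation {Ω : Type*} [MeasureSpace Ω] [IsProbabilityMeasure (volume : Measure Ω)]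
    {t : ℕ} (Z : Fin t → Ω → ℝ) (hZm : ∀ j, Measurable (Z j))
    (hZ01 : ∀ j ω, Z j ω = 0 ∨ Z j ω = 1) (G : (Fin t → Bool) → ℝ) :
    ∫ ω, G (fun j => if Z j ω = 1 then true else false) ∂volume
      = ∑ b : Fin t → Bool,
          (volume {ω | ∀ j, Z j ω = (if b j then 1 else 0)}).toReal * G b := by
  have hset : ∀ b : Fin t → Bool, {ω | ∀ j, Z j ω = (if b j then 1 else 0)}
      = ⋂ j, (Z j) ⁻¹' {(if b j then (1:ℝ) else 0)} := by
    intro b; ext ω; simp [Set.mem_iInter]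
  have hmeas : ∀ b : Fin t → Bool,
      MeasurableSet {ω | ∀ j, Z j ω = (if b j then 1 else 0)} := by
    intro b; rw [hset]
    exact MeasurableSet.iInter fun j => (hZm j) (measurableSet_singleton _)
  have hpt : ∀ ω, G (fun j => if Z j ω = 1 then true else false)
      = ∑ b : Fin t → Bool,
          Set.indicator {ω | ∀ j, Z j ω = (if b j then 1 else 0)} (fun _ => G b) ω := by
    intro ω
    set b₀ : Fin t → Bool := fun j => if Z j ω = 1 then true else false with hb₀
    have hmem : ω ∈ {ω | ∀ j, Z j ω = (if b₀ j then 1 else 0)} := by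
      intro j
      rcases hZ01 j ω with h | h <;> simp [hb₀, h]
    rw [Finset.sum_eq_single b₀]
    · rw [Set.indicator_of_mem hmem]
    · intro b _ hb
      apply Set.indicator_of_notMem
      intro hωb
      apply hb
      funext j
      have h1 := hωb j
      rcases hZ01 j ω with h | h
      · cases hbj : b j with
        | false => simp only [hb₀, h]; norm_num
        | true => rw [hbj] at h1; rw [h] at h1; norm_num at h1
      · cases hbj : b j with
        | true => simp only [hb₀, h]; norm_num
        | false => rw [hbj] at h1; rw [h] at h1; norm_num at h1
    · intro h; exact absurd (Finset.mem_univ b₀) h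
  calc ∫ ω, G (fun j => if Z j ω = 1 then true else false) ∂volume
      = ∫ ω, ∑ b : Fin t → Bool,
          Set.indicator {ω | ∀ j, Z j ω = (if b j then 1 else 0)} (fun _ => G b) ω ∂volume := by
        exact integral_congr_ae (ae_of_all _ hpt)
    _ = ∑ b : Fin t → Bool,
          ∫ ω, Set.indicator {ω | ∀ j, Z j ω = (if b j then 1 else 0)} (fun _ => G b) ω ∂volume := by
        apply integral_finset_sum
        intro b _
        exact (integrable_const (G b)).indicator (hmeas b)
    _ = ∑ b : Fin t → Bool,
          (volume {ω | ∀ j, Z j ω = (if b j then 1 else 0)}).toReal * G b := by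
        apply Finset.sum_congr rfl
        intro b _
        rw [integral_indicator_const (G b) (hmeas b), smul_eq_mul, measureReal_def]

end Aux

section Aux2

lemma indep_event_prob {Ω' : Type*} [MeasureSpace Ω'] [IsProbabilityMeasure (volume : Measure Ω')]
    {n : ℕ} {p : ℝ} (hp0 : 0 ≤ p)
    (Y : Fin n → Ω' → ℝ) (hYmeas : ∀ i, Measurable (Y i))
    (hY01 : ∀ i ω, Y i ω = 0 ∨ Y i ω = 1)
    (hYp : ∀ i, (volume {ω | Y i ω = 1}).toReal = p)
    (hYindep : ProbabilityTheory.iIndepFun Y volume)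
    {t : ℕ} (idx : Fin t → Fin n) (hinj : Function.Injective idx) (b : Fin t → Bool) :
    (volume {ω | ∀ j, Y (idx j) ω = (if b j then 1 else 0)}).toReal
      = ∏ j, (if b j then p else 1 - p) := by
  classical
  -- single-coordinate probabilities
  have hp1' : ∀ i, volume {ω | Y i ω = 1} ≤ 1 := fun i => by
    rw [← measure_univ (μ := (volume : Measure Ω'))]
    exact measure_mono (Set.subset_univ _)
  have h1 : ∀ i, volume {ω | Y i ω = (1:ℝ)} = ENNReal.ofReal p := by
    intro i
    rw [← hYp i, ENNReal.ofReal_toReal (measure_ne_top _ _)]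
  have h0 : ∀ i, volume {ω | Y i ω = (0:ℝ)} = ENNReal.ofReal (1 - p) := by
    intro i
    have hcompl : {ω | Y i ω = (0:ℝ)} = {ω | Y i ω = (1:ℝ)}ᶜ := by
      ext ω
      simp only [Set.mem_setOf_eq, Set.mem_compl_iff]
      constructor
      · intro h h1'; rw [h] at h1'; norm_num at h1'
      · intro h; rcases hY01 i ω with h' | h'
        · exact h'
        · exact absurd h' h
    have hpre : Y i ⁻¹' {(1:ℝ)} = {ω | Y i ω = 1} := rfl
    rw [hcompl, ← hpre, measure_compl ((hYmeas i) (measurableSet_singleton 1)) (measure_ne_top _ _),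
      measure_univ, hpre, h1 i, ← ENNReal.ofReal_one, ← ENNReal.ofReal_sub _ hp0]
  have hA : ∀ (v : Bool) (i : Fin n),
      volume (Y i ⁻¹' {(if v then (1:ℝ) else 0)}) = ENNReal.ofReal (if v then p else 1 - p) := by
    intro v i
    cases v
    · simpa [Set.preimage, Set.mem_singleton_iff] using h0 i
    · simpa [Set.preimage, Set.mem_singleton_iff] using h1 i
  -- sets on all coordinates
  set sets : Fin n → Set ℝ := fun i =>
    if h : ∃ j, idx j = i then {(if b h.choose then (1:ℝ) else 0)} else Set.univ with hsets_def
  have hsets_idx : ∀ j, sets (idx j) = {(if b j then (1:ℝ) else 0)} := by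
    intro j
    have hex : ∃ j', idx j' = idx j := ⟨j, rfl⟩
    have hch : hex.choose = j := hinj hex.choose_spec
    simp only [hsets_def, dif_pos hex, hch]
  have hsets_meas : ∀ i, i ∈ Finset.image idx Finset.univ → MeasurableSet (sets i) := by
    intro i _
    by_cases h : ∃ j, idx j = i
    · simp only [hsets_def, dif_pos h]; exact measurableSet_singleton _
    · simp only [hsets_def, dif_neg h]; exact MeasurableSet.univ
  have hkey := hYindep.measure_inter_preimage_eq_mul (Finset.image idx Finset.univ) hsets_meas
  have hsetEq : (⋂ i ∈ Finset.image idx Finset.univ, Y i ⁻¹' sets i)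
      = {ω | ∀ j, Y (idx j) ω = (if b j then 1 else 0)} := by
    ext ω
    simp only [Set.mem_iInter, Finset.mem_image, Finset.mem_univ, true_and, Set.mem_setOf_eq,
      Set.mem_preimage]
    constructor
    · intro h j
      have := h (idx j) ⟨j, rfl⟩
      rw [hsets_idx j] at this
      simpa using this
    · rintro h i ⟨j, rfl⟩
      rw [hsets_idx j]
      simpa using h j
  have hprod : ∏ i ∈ Finset.image idx Finset.univ, volume (Y i ⁻¹' sets i)
      = ∏ j : Fin t, ENNReal.ofReal (if b j then p else 1 - p) := by
    rw [Finset.prod_image (fun a _ a' _ h => hinj h)]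
    apply Finset.prod_congr rfl
    intro j _
    rw [hsets_idx j, hA (b j) (idx j)]
  rw [← hsetEq, hkey, hprod, ENNReal.toReal_prod]
  apply Finset.prod_congr rfl
  intro j _
  rw [ENNReal.toReal_ofReal]
  have hple : p ≤ 1 := by
    rw [← hYp (idx j), ← ENNReal.toReal_one]
    exact ENNReal.toReal_mono ENNReal.one_ne_top (hp1' (idx j))
  cases b j
  · simpa using sub_nonneg.mpr hple
  · simpa using hp0

set_option maxHeartbeats 1000000 in
lemma sum_abs_prod_le {k t : ℕ} {c : ℝ} (hc0 : 0 ≤ c) (hc1 : c ≤ 1)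
    (g : Fin k → Fin t) (hg : Function.Surjective g) :
    ∑ b : Fin t → Bool, |∏ j : Fin k, ((if b (g j) then (1:ℝ) else 0) - c)| ≤ 1 := by
  have hw0 : ∀ (v : Bool), 0 ≤ |(if v = true then (1:ℝ) else 0) - c| := fun v => abs_nonneg _
  have hw1 : ∀ (v : Bool), |(if v = true then (1:ℝ) else 0) - c| ≤ 1 := by
    intro v; cases v
    · rw [show (if (false:Bool) = true then (1:ℝ) else 0) = 0 from rfl,
        zero_sub, abs_neg, abs_of_nonneg hc0]
      exact hc1
    · rw [show (if (true:Bool) = true then (1:ℝ) else 0) = 1 from rfl,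
        abs_of_nonneg (sub_nonneg.mpr hc1)]
      linarith
  -- step 1 : per-b bound
  have step1 : ∀ b : Fin t → Bool,
      |∏ j : Fin k, ((if b (g j) then (1:ℝ) else 0) - c)|
        ≤ ∏ i : Fin t, |(if b i then (1:ℝ) else 0) - c| := by
    intro b
    rw [Finset.abs_prod]
    set s := Function.surjInv hg with hs
    have hsinj : Function.Injective s := Function.injective_surjInv hg
    have hgs : ∀ i, g (s i) = i := fun i => Function.surjInv_eq hg i
    set T := Finset.image s Finset.univ with hT
    have hTeq : ∏ j ∈ T, |(if b (g j) then (1:ℝ) else 0) - c|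
        = ∏ i : Fin t, |(if b i then (1:ℝ) else 0) - c| := by
      rw [hT, Finset.prod_image (fun a _ a' _ h => hsinj h)]
      exact Finset.prod_congr rfl fun i _ => by rw [hgs i]
    calc ∏ j : Fin k, |(if b (g j) then (1:ℝ) else 0) - c|
        = (∏ j ∈ T, |(if b (g j) then (1:ℝ) else 0) - c|)
            * ∏ j ∈ Tᶜ, |(if b (g j) then (1:ℝ) else 0) - c| :=
          (Finset.prod_mul_prod_compl T _).symm
      _ ≤ (∏ j ∈ T, |(if b (g j) then (1:ℝ) else 0) - c|) * 1 := by
          apply mul_le_mul_of_nonneg_left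
          · exact Finset.prod_le_one (fun j _ => hw0 _) (fun j _ => hw1 _)
          · exact Finset.prod_nonneg fun j _ => hw0 _
      _ = ∏ i : Fin t, |(if b i then (1:ℝ) else 0) - c| := by rw [mul_one, hTeq]
  have h2 : ∑ b : Fin t → Bool, |∏ j : Fin k, ((if b (g j) then (1:ℝ) else 0) - c)|
      ≤ ∑ b : Fin t → Bool, ∏ i : Fin t, |(if b i then (1:ℝ) else 0) - c| :=
    Finset.sum_le_sum fun b _ => step1 b
  have h3 : ∑ b : Fin t → Bool, ∏ i : Fin t, |(if b i then (1:ℝ) else 0) - c|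
      = ∏ i : Fin t, ∑ v : Bool, |(if v = true then (1:ℝ) else 0) - c| :=
    (Fintype.prod_sum fun _ v => |(if v = true then (1:ℝ) else 0) - c|).symm
  have h4 : ∑ v : Bool, |(if v = true then (1:ℝ) else 0) - c| = 1 := by
    rw [Fintype.univ_bool, Finset.sum_pair (by decide : (true:Bool) ≠ false),
      show (if (true:Bool) = true then (1:ℝ) else 0) = 1 from rfl,
      show (if (false:Bool) = true then (1:ℝ) else 0) = 0 from rfl,
      zero_sub, abs_neg, abs_of_nonneg hc0, abs_of_nonneg (sub_nonneg.mpr hc1)]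
    ring
  rw [h3, h4] at h2
  simpa using h2

end Aux2

lemma per_f
    {Ω : Type*} [MeasureSpace Ω] [IsProbabilityMeasure (volume : Measure Ω)]
    {Ω' : Type*} [MeasureSpace Ω'] [IsProbabilityMeasure (volume : Measure Ω')]
    {n k : ℕ} {ε p c : ℝ} (hε0 : 0 ≤ ε) (hp0 : 0 ≤ p)
    (hc0 : 0 ≤ c) (hc1 : c ≤ 1)
    (X : Fin n → Ω → ℝ) (hXmeas : ∀ i, Measurable (X i))
    (hX01 : ∀ i ω, X i ω = 0 ∨ X i ω = 1)
    (happrox : KWiseApproxIndep n X k ε p)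
    (Y : Fin n → Ω' → ℝ) (hYmeas : ∀ i, Measurable (Y i))
    (hY01 : ∀ i ω, Y i ω = 0 ∨ Y i ω = 1)
    (hYp : ∀ i, (volume {ω | Y i ω = 1}).toReal = p)
    (hYindep : ProbabilityTheory.iIndepFun Y volume)
    (f : Fin k → Fin n) :
    |(∫ ω, ∏ j, (X (f j) ω - c) ∂volume) - (∫ ω, ∏ j, (Y (f j) ω - c) ∂volume)| ≤ ε := by
  classical
  set S : Finset (Fin n) := Finset.image f Finset.univ with hS
  have ht : S.card ≤ k := le_trans Finset.card_image_le (by simp)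
  set e := S.orderIsoOfFin (rfl : S.card = S.card) with he
  set idx : Fin S.card → Fin n := fun j => (e j : Fin n) with hidx
  have hinj : Function.Injective idx := fun a a' h => e.injective (Subtype.ext h)
  have hmem : ∀ j : Fin k, f j ∈ S := fun j => Finset.mem_image_of_mem f (Finset.mem_univ j)
  set g : Fin k → Fin S.card := fun j => e.symm ⟨f j, hmem j⟩ with hg
  have hidxg : ∀ j, idx (g j) = f j := by
    intro j
    simp only [hidx, hg]
    rw [OrderIso.apply_symm_apply]
  have hgsurj : Function.Surjective g := by
    intro i
    have hmem' : (e i : Fin n) ∈ Finset.image f Finset.univ := (e i).2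
    obtain ⟨j, _, hj⟩ := Finset.mem_image.mp hmem'
    refine ⟨j, ?_⟩
    simp only [hg]
    have hsub : (⟨f j, hmem j⟩ : {x // x ∈ S}) = e i := Subtype.ext hj
    rw [hsub, OrderIso.symm_apply_apply]
  set G : (Fin S.card → Bool) → ℝ :=
    fun b => ∏ j : Fin k, ((if b (g j) then (1:ℝ) else 0) - c) with hG
  have hXpt : ∀ ω, (∏ j, (X (f j) ω - c))
      = G (fun j' => if X (idx j') ω = 1 then true else false) := by
    intro ω
    simp only [hG]
    refine Finset.prod_congr rfl fun j _ => ?_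
    simp only [hidxg j]
    rcases hX01 (f j) ω with h | h
    · rw [h]; norm_num
    · rw [h]; norm_num
  have hYpt : ∀ ω, (∏ j, (Y (f j) ω - c))
      = G (fun j' => if Y (idx j') ω = 1 then true else false) := by
    intro ω
    simp only [hG]
    refine Finset.prod_congr rfl fun j _ => ?_
    simp only [hidxg j]
    rcases hY01 (f j) ω with h | h
    · rw [h]; norm_num
    · rw [h]; norm_num
  have hXint : ∫ ω, ∏ j, (X (f j) ω - c) ∂volume
      = ∑ b : Fin S.card → Bool,
          (volume {ω | ∀ j, X (idx j) ω = (if b j then 1 else 0)}).toReal * G b := by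
    have h1 : ∫ ω, ∏ j, (X (f j) ω - c) ∂volume
        = ∫ ω, G (fun j' => if X (idx j') ω = 1 then true else false) ∂volume :=
      integral_congr_ae (ae_of_all _ hXpt)
    rw [h1, expand_expectation (fun j' => X (idx j')) (fun j' => hXmeas (idx j'))
      (fun j' ω => hX01 (idx j') ω) G]
  have hYint : ∫ ω, ∏ j, (Y (f j) ω - c) ∂volume
      = ∑ b : Fin S.card → Bool, (∏ j, (if b j then p else 1 - p)) * G b := by
    have h1 : ∫ ω, ∏ j, (Y (f j) ω - c) ∂volume
        = ∫ ω, G (fun j' => if Y (idx j') ω = 1 then true else false) ∂volume :=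
      integral_congr_ae (ae_of_all _ hYpt)
    rw [h1, expand_expectation (fun j' => Y (idx j')) (fun j' => hYmeas (idx j'))
      (fun j' ω => hY01 (idx j') ω) G]
    refine Finset.sum_congr rfl fun b _ => ?_
    rw [indep_event_prob hp0 Y hYmeas hY01 hYp hYindep idx hinj b]
  rw [hXint, hYint, ← Finset.sum_sub_distrib]
  have hstep : ∀ b ∈ (Finset.univ : Finset (Fin S.card → Bool)),
      |(volume {ω | ∀ j, X (idx j) ω = (if b j then 1 else 0)}).toReal * G b
        - (∏ j, (if b j then p else 1 - p)) * G b| ≤ ε * |G b| := by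
    intro b _
    rw [← sub_mul, abs_mul]
    exact mul_le_mul_of_nonneg_right (happrox S.card ht idx hinj b) (abs_nonneg _)
  calc |∑ b : Fin S.card → Bool,
        ((volume {ω | ∀ j, X (idx j) ω = (if b j then 1 else 0)}).toReal * G b
          - (∏ j, (if b j then p else 1 - p)) * G b)|
      ≤ ∑ b : Fin S.card → Bool,
        |(volume {ω | ∀ j, X (idx j) ω = (if b j then 1 else 0)}).toReal * G b
          - (∏ j, (if b j then p else 1 - p)) * G b| := Finset.abs_sum_le_sum_abs _ _
    _ ≤ ∑ b : Fin S.card → Bool, ε * |G b| := Finset.sum_le_sum hstep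
    _ = ε * ∑ b : Fin S.card → Bool, |G b| := by rw [← Finset.mul_sum]
    _ ≤ ε * 1 := mul_le_mul_of_nonneg_left (sum_abs_prod_le hc0 hc1 g hgsurj) hε0
    _ = ε := mul_one ε

/-- The `k`-th central moment of the sum of `k`-wise `ε`-approximately independent 0-1
random variables differs from that of the sum of truly independent ones
(with success probability `p`) by at most `ε·n^k`. -/
theorem kth_moment_comparison
    {Ω : Type*} [MeasureSpace Ω] [IsProbabilityMeasure (volume : Measure Ω)]
    {Ω' : Type*} [MeasureSpace Ω'] [IsProbabilityMeasure (volume : Measure Ω')]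
    (n k : ℕ) (ε p : ℝ) (hn : 1 ≤ n) (hk2 : 2 ≤ k) (hkeven : Even k)
    (hε0 : 0 ≤ ε) (hε1 : ε ≤ 1) (hp0 : 0 ≤ p) (hp1 : p ≤ 1)
    (X : Fin n → Ω → ℝ) (hXmeas : ∀ i, Measurable (X i))
    (hX01 : ∀ i ω, X i ω = 0 ∨ X i ω = 1)
    (hident : ∀ i j : Fin n, volume {ω | X i ω = 1} = volume {ω | X j ω = 1})
    (happrox : KWiseApproxIndep n X k ε p)
    (Y : Fin n → Ω' → ℝ) (hYmeas : ∀ i, Measurable (Y i))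
    (hY01 : ∀ i ω, Y i ω = 0 ∨ Y i ω = 1)
    (hYp : ∀ i, (volume {ω | Y i ω = 1}).toReal = p)
    (hYindep : ProbabilityTheory.iIndepFun Y volume) :
    |(∫ ω, ((∑ i, X i ω) - ∫ ω', (∑ i, X i ω') ∂volume) ^ k ∂volume) -
      (∫ ω, ((∑ i, Y i ω) - ∫ ω', (∑ i, X i ω') ∂volume) ^ k ∂volume)| ≤
      ε * (n : ℝ) ^ k := by
  classical
  set μR := ∫ ω', (∑ i, X i ω') ∂volume with hμR
  have hn0 : (0:ℝ) < n := by
    have : (0:ℕ) < n := lt_of_lt_of_le Nat.zero_lt_one hn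
    exact_mod_cast this
  set c : ℝ := μR / n with hc
  have hXib : ∀ i, Integrable (X i) volume := fun i =>
    (integrable_const (1:ℝ)).mono' (hXmeas i).aestronglyMeasurable
      (ae_of_all _ fun ω => by rcases hX01 i ω with h | h <;> simp [h])
  have hμsum : μR = ∑ i, ∫ ω, X i ω ∂volume := by
    rw [hμR]; exact integral_finset_sum _ fun i _ => hXib i
  have hint01 : ∀ i : Fin n,
      0 ≤ (∫ ω, X i ω ∂volume) ∧ (∫ ω, X i ω ∂volume) ≤ 1 := by
    intro i
    constructor
    · exact integral_nonneg fun ω => by rcases hX01 i ω with h | h <;> simp [h]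
    · calc ∫ ω, X i ω ∂volume ≤ ∫ _ω, (1:ℝ) ∂volume :=
          integral_mono (hXib i) (integrable_const 1)
            (fun ω => by rcases hX01 i ω with h | h <;> simp [h])
        _ = 1 := by simp
  have hμ0 : 0 ≤ μR := hμsum ▸ Finset.sum_nonneg fun i _ => (hint01 i).1
  have hμn : μR ≤ n := by
    rw [hμsum]
    calc ∑ i, ∫ ω, X i ω ∂volume ≤ ∑ _i : Fin n, (1:ℝ) :=
        Finset.sum_le_sum fun i _ => (hint01 i).2
      _ = n := by simp
  have hc0 : 0 ≤ c := div_nonneg hμ0 hn0.le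
  have hc1 : c ≤ 1 := (div_le_one hn0).mpr hμn
  have hnc : (n:ℝ) * c = μR := by rw [hc]; field_simp
  have hXS : ∀ ω, (∑ i, X i ω) - μR = ∑ i, (X i ω - c) := by
    intro ω
    rw [Finset.sum_sub_distrib, Finset.sum_const, Finset.card_univ, Fintype.card_fin,
      nsmul_eq_mul, hnc]
  have hYS : ∀ ω, (∑ i, Y i ω) - μR = ∑ i, (Y i ω - c) := by
    intro ω
    rw [Finset.sum_sub_distrib, Finset.sum_const, Finset.card_univ, Fintype.card_fin,
      nsmul_eq_mul, hnc]
  have habs : ∀ (x : ℝ), (x = 0 ∨ x = 1) → |x - c| ≤ 1 := by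
    rintro x (rfl | rfl)
    · rw [zero_sub, abs_neg, abs_of_nonneg hc0]; exact hc1
    · rw [abs_of_nonneg (sub_nonneg.mpr hc1)]; linarith
  have hprodX : ∀ (f : Fin k → Fin n),
      Integrable (fun ω => ∏ j, (X (f j) ω - c)) volume := by
    intro f
    apply (integrable_const (1:ℝ)).mono'
    · exact (Finset.measurable_prod Finset.univ
        (fun j _ => (hXmeas (f j)).sub measurable_const)).aestronglyMeasurable
    · refine ae_of_all _ fun ω => ?_
      rw [Real.norm_eq_abs, Finset.abs_prod]
      exact Finset.prod_le_one (fun j _ => abs_nonneg _)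
        (fun j _ => habs _ (hX01 (f j) ω))
  have hprodY : ∀ (f : Fin k → Fin n),
      Integrable (fun ω => ∏ j, (Y (f j) ω - c)) volume := by
    intro f
    apply (integrable_const (1:ℝ)).mono'
    · exact (Finset.measurable_prod Finset.univ
        (fun j _ => (hYmeas (f j)).sub measurable_const)).aestronglyMeasurable
    · refine ae_of_all _ fun ω => ?_
      rw [Real.norm_eq_abs, Finset.abs_prod]
      exact Finset.prod_le_one (fun j _ => abs_nonneg _)
        (fun j _ => habs _ (hY01 (f j) ω))
  have hXrw : ∫ ω, ((∑ i, X i ω) - μR) ^ k ∂volume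
      = ∑ f : Fin k → Fin n, ∫ ω, ∏ j, (X (f j) ω - c) ∂volume := by
    have h1 : ∫ ω, ((∑ i, X i ω) - μR) ^ k ∂volume
        = ∫ ω, ∑ f : Fin k → Fin n, ∏ j, (X (f j) ω - c) ∂volume := by
      refine integral_congr_ae (ae_of_all _ fun ω => ?_)
      show ((∑ i, X i ω) - μR) ^ k = ∑ f : Fin k → Fin n, ∏ j, (X (f j) ω - c)
      rw [hXS ω, Fintype.sum_pow]
    rw [h1]
    exact integral_finset_sum _ fun f _ => hprodX f
  have hYrw : ∫ ω, ((∑ i, Y i ω) - μR) ^ k ∂volume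
      = ∑ f : Fin k → Fin n, ∫ ω, ∏ j, (Y (f j) ω - c) ∂volume := by
    have h1 : ∫ ω, ((∑ i, Y i ω) - μR) ^ k ∂volume
        = ∫ ω, ∑ f : Fin k → Fin n, ∏ j, (Y (f j) ω - c) ∂volume := by
      refine integral_congr_ae (ae_of_all _ fun ω => ?_)
      show ((∑ i, Y i ω) - μR) ^ k = ∑ f : Fin k → Fin n, ∏ j, (Y (f j) ω - c)
      rw [hYS ω, Fintype.sum_pow]
    rw [h1]
    exact integral_finset_sum _ fun f _ => hprodY f
  rw [hXrw, hYrw, ← Finset.sum_sub_distrib]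
  calc |∑ f : Fin k → Fin n,
        ((∫ ω, ∏ j, (X (f j) ω - c) ∂volume) - ∫ ω, ∏ j, (Y (f j) ω - c) ∂volume)|
      ≤ ∑ f : Fin k → Fin n,
        |(∫ ω, ∏ j, (X (f j) ω - c) ∂volume) - ∫ ω, ∏ j, (Y (f j) ω - c) ∂volume| :=
        Finset.abs_sum_le_sum_abs _ _
    _ ≤ ∑ _f : Fin k → Fin n, ε := Finset.sum_le_sum fun f _ =>
        per_f hε0 hp0 hc0 hc1 X hXmeas hX01 happrox Y hYmeas hY01 hYp hYindep f
    _ = ε * (n : ℝ) ^ k := by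
        rw [Finset.sum_const, Finset.card_univ, nsmul_eq_mul, mul_comm]
        congr 1
        rw [Fintype.card_fun, Fintype.card_fin, Fintype.card_fin]
        push_cast
        ring
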